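/- For the simple walk step set S = {(1,0),(−1,0),(0,1),(0,−1)} and z ∈ (0,1/4), define d(x;z) = (z(x²+1)−x)² − 4z²x², whose four real roots are x₁(z) = ((1+2z)−√(1+4z))/(2z), x₂(z) = ((1−2z)−√(1−4z))/(2z), x₃(z) = ((1−2z)+√(1−4z))/(2z), x₄(z) = ((1+2z)+√(1+4z))/(2z), satisfying 0 < x₁(z) < x₂(z) < 1 < x₃(z) < x₄(z). Then for every z ∈ (0,1/4), ∫_{x₂(z)}^{x₃(z)} dx/√(d(x;z)) = 2 · ∫_{−1}^{x₁(z)} dx/√(d(x;z)); that is, the period ratio ω₂(z)/ω₃(z) equals 2 for all z ∈ (0,1/4). -/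

import Mathlib

/-- The discriminant `d(x; z) = (z(x²+1) − x)² − 4z²x²` of the kernel of the simple walk,
with step set `S = {(1,0),(−1,0),(0,1),(0,−1)}`. -/
def dSimple (z x : ℝ) : ℝ := (z * (x ^ 2 + 1) - x) ^ 2 - 4 * z ^ 2 * x ^ 2

/-- The branch point `x₁(z) = ((1+2z) − √(1+4z))/(2z)` of the simple walk. -/
noncomputable def sx1 (z : ℝ) : ℝ := ((1 + 2 * z) - Real.sqrt (1 + 4 * z)) / (2 * z)

/-- The branch point `x₂(z) = ((1−2z) − √(1−4z))/(2z)` of the simple walk. -/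
noncomputable def sx2 (z : ℝ) : ℝ := ((1 - 2 * z) - Real.sqrt (1 - 4 * z)) / (2 * z)

/-- The branch point `x₃(z) = ((1−2z) + √(1−4z))/(2z)` of the simple walk. -/
noncomputable def sx3 (z : ℝ) : ℝ := ((1 - 2 * z) + Real.sqrt (1 - 4 * z)) / (2 * z)

/-- The branch point `x₄(z) = ((1+2z) + √(1+4z))/(2z)` of the simple walk. -/
noncomputable def sx4 (z : ℝ) : ℝ := ((1 + 2 * z) + Real.sqrt (1 + 4 * z)) / (2 * z)

open Set MeasureTheory

lemma dSimple_inv (z u : ℝ) (hu : u ≠ 0) : dSimple z u⁻¹ * u ^ 4 = dSimple z u := by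
  unfold dSimple; field_simp; ring

lemma key_cleared (z k u : ℝ) (hk : 2*z*k^2 - k + 2*z = 0) :
    (z*((k*u-1)^2 + (u-k)^2) - (k*u-1)*(u-k))^2 - 4*z^2*(k*u-1)^2*(u-k)^2
      = (1-k^2)^2 * dSimple z u := by
  unfold dSimple
  linear_combination (-1*k + 2*u + 2*u*k^2 - 6*u^2*k + 2*u^3 + 2*u^3*k^2 - u^4*k) * hk

lemma key_identity (z k u : ℝ) (hk : 2*z*k^2 - k + 2*z = 0) (hu : u - k ≠ 0) :
    dSimple z ((k*u-1)/(u-k)) * (u-k)^4 = (1-k^2)^2 * dSimple z u := by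
  rw [← key_cleared z k u hk]
  unfold dSimple; field_simp

lemma mobius_sub (z A B C D α β : ℝ)
    (hden : ∀ u ∈ Set.Ioo α β, C*u + D ≠ 0)
    (hdet : A*D - B*C ≠ 0)
    (hkey : ∀ u ∈ Set.Ioo α β,
      dSimple z ((A*u+B)/(C*u+D)) * (C*u+D)^4 = (A*D-B*C)^2 * dSimple z u) :
    ∫ x in (fun u => (A*u+B)/(C*u+D)) '' Set.Ioo α β, 1 / Real.sqrt (dSimple z x)
      = ∫ u in Set.Ioo α β, 1 / Real.sqrt (dSimple z u) := by
  have hder : ∀ u ∈ Set.Ioo α β,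
      HasDerivWithinAt (fun u => (A*u+B)/(C*u+D)) ((A*D-B*C)/(C*u+D)^2) (Set.Ioo α β) u := by
    intro u hu
    have h1 : HasDerivAt (fun u : ℝ => A*u+B) A u := by
      simpa using ((hasDerivAt_id u).const_mul A).add_const B
    have h2 : HasDerivAt (fun u : ℝ => C*u+D) C u := by
      simpa using ((hasDerivAt_id u).const_mul C).add_const D
    have := (h1.div h2 (hden u hu))
    convert this.hasDerivWithinAt using 1
    all_goals (try rfl)
    congr 1
    ring
  have hinj : Set.InjOn (fun u => (A*u+B)/(C*u+D)) (Set.Ioo α β) := by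
    intro u hu v hv h
    rw [div_eq_div_iff (hden u hu) (hden v hv)] at h
    have h2 : (A*D - B*C)*(u - v) = 0 := by linear_combination h
    rcases mul_eq_zero.mp h2 with h3 | h3
    · exact absurd h3 hdet
    · linarith [sub_eq_zero.mp h3]
  rw [MeasureTheory.integral_image_eq_integral_abs_deriv_smul measurableSet_Ioo hder hinj]
  apply MeasureTheory.setIntegral_congr_fun measurableSet_Ioo
  intro u hu
  have hcd := hden u hu
  have hcd2 : (0:ℝ) < (C*u+D)^2 := by positivity
  have hdm : dSimple z ((A*u+B)/(C*u+D)) = ((A*D-B*C)/(C*u+D)^2)^2 * dSimple z u := by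
    have := hkey u hu
    rw [div_pow, ← pow_mul, div_mul_eq_mul_div, eq_div_iff (by positivity)]
    linear_combination this
  simp only [smul_eq_mul]
  rw [hdm, Real.sqrt_mul (sq_nonneg _), Real.sqrt_sq_eq_abs]
  have ha : |(A*D-B*C)/(C*u+D)^2| ≠ 0 := by
    simp only [ne_eq, abs_eq_zero, div_eq_zero_iff]
    push_neg
    exact ⟨hdet, by positivity⟩
  rw [one_div, mul_inv, ← mul_assoc, mul_inv_cancel₀ ha, one_mul, one_div]

lemma meas_integrand (z : ℝ) : Measurable (fun x => 1 / Real.sqrt (dSimple z x)) := by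
  apply Measurable.div measurable_const
  exact (Real.continuous_sqrt.comp (by unfold dSimple; continuity)).measurable

lemma integrableOn_left (z α β C : ℝ) (hC : 0 < C)
    (hd : ∀ x ∈ Set.Ioo α β, C * (x - α) ≤ dSimple z x) :
    IntegrableOn (fun x => 1 / Real.sqrt (dSimple z x)) (Set.Ioo α β) := by
  have base : IntegrableOn (fun x => (x - α) ^ (-(1/2) : ℝ)) (Set.Ioo α β) := by
    have h : IntervalIntegrable (fun x : ℝ => x ^ (-(1/2) : ℝ)) volume 0 (β - α) :=
      intervalIntegral.intervalIntegrable_rpow' (by norm_num)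
    have h2 : IntervalIntegrable (fun x : ℝ => (x - α) ^ (-(1/2) : ℝ)) volume α β := by
      have := h.comp_sub_right α
      simpa using this
    rcases le_or_gt α β with hle | hlt
    · exact ((intervalIntegrable_iff_integrableOn_Ioc_of_le hle).mp h2).mono_set
        Ioo_subset_Ioc_self
    · simp [Ioo_eq_empty (le_of_lt hlt).not_gt]
  apply Integrable.mono' (base.const_mul ((Real.sqrt C)⁻¹))
  · exact ((meas_integrand z).aestronglyMeasurable).restrict
  · rw [MeasureTheory.ae_restrict_iff' measurableSet_Ioo]
    filter_upwards with x hx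
    have h1 : 0 < x - α := sub_pos.mpr hx.1
    have h3 : Real.sqrt (C * (x-α)) ≤ Real.sqrt (dSimple z x) := Real.sqrt_le_sqrt (hd x hx)
    have h4 : 0 < Real.sqrt (C * (x-α)) := Real.sqrt_pos.mpr (by positivity)
    rw [Real.norm_eq_abs, abs_of_nonneg (by positivity)]
    calc 1 / Real.sqrt (dSimple z x) ≤ 1 / Real.sqrt (C * (x-α)) :=
          one_div_le_one_div_of_le h4 h3
      _ = (Real.sqrt C)⁻¹ * ((x - α) ^ (-(1/2) : ℝ)) := by
          rw [Real.sqrt_mul hC.le, Real.rpow_neg h1.le, ← Real.sqrt_eq_rpow]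
          rw [one_div, mul_inv]

lemma integrableOn_right (z α β C : ℝ) (hC : 0 < C)
    (hd : ∀ x ∈ Set.Ioo α β, C * (β - x) ≤ dSimple z x) :
    IntegrableOn (fun x => 1 / Real.sqrt (dSimple z x)) (Set.Ioo α β) := by
  have base : IntegrableOn (fun x => (β - x) ^ (-(1/2) : ℝ)) (Set.Ioo α β) := by
    have h : IntervalIntegrable (fun x : ℝ => x ^ (-(1/2) : ℝ)) volume 0 (β - α) :=
      intervalIntegral.intervalIntegrable_rpow' (by norm_num)
    have h2 : IntervalIntegrable (fun x : ℝ => (β - x) ^ (-(1/2) : ℝ)) volume α β := by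
      have := (h.comp_sub_left β).symm
      simpa using this
    rcases le_or_gt α β with hle | hlt
    · exact ((intervalIntegrable_iff_integrableOn_Ioc_of_le hle).mp h2).mono_set
        Ioo_subset_Ioc_self
    · simp [Ioo_eq_empty (le_of_lt hlt).not_gt]
  apply Integrable.mono' (base.const_mul ((Real.sqrt C)⁻¹))
  · exact ((meas_integrand z).aestronglyMeasurable).restrict
  · rw [MeasureTheory.ae_restrict_iff' measurableSet_Ioo]
    filter_upwards with x hx
    have h1 : 0 < β - x := sub_pos.mpr hx.2
    have h3 : Real.sqrt (C * (β-x)) ≤ Real.sqrt (dSimple z x) := Real.sqrt_le_sqrt (hd x hx)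
    have h4 : 0 < Real.sqrt (C * (β-x)) := Real.sqrt_pos.mpr (by positivity)
    rw [Real.norm_eq_abs, abs_of_nonneg (by positivity)]
    calc 1 / Real.sqrt (dSimple z x) ≤ 1 / Real.sqrt (C * (β-x)) :=
          one_div_le_one_div_of_le h4 h3
      _ = (Real.sqrt C)⁻¹ * ((β - x) ^ (-(1/2) : ℝ)) := by
          rw [Real.sqrt_mul hC.le, Real.rpow_neg h1.le, ← Real.sqrt_eq_rpow]
          rw [one_div, mul_inv]

set_option maxHeartbeats 1000000 in
/-- For the simple walk and every `z ∈ (0,1/4)`: `x₁(z), x₂(z), x₃(z), x₄(z)` are roots of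
`d(·;z)`, satisfy `0 < x₁ < x₂ < 1 < x₃ < x₄`, and
`∫_{x₂}^{x₃} dx/√d = 2 ∫_{−1}^{x₁} dx/√d`; that is, the period ratio `ω₂(z)/ω₃(z)` equals
`2` for all `z ∈ (0,1/4)`. -/
theorem simple_walk_period_ratio :
    ∀ z ∈ Set.Ioo (0 : ℝ) (1 / 4),
      dSimple z (sx1 z) = 0 ∧ dSimple z (sx2 z) = 0 ∧ dSimple z (sx3 z) = 0 ∧
      dSimple z (sx4 z) = 0 ∧
      0 < sx1 z ∧ sx1 z < sx2 z ∧ sx2 z < 1 ∧ 1 < sx3 z ∧ sx3 z < sx4 z ∧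
      (∫ x in sx2 z..sx3 z, 1 / Real.sqrt (dSimple z x)) =
        2 * ∫ x in (-1 : ℝ)..(sx1 z), 1 / Real.sqrt (dSimple z x) := by
  rintro z ⟨hz0, hz4⟩
  set a := Real.sqrt (1 + 4*z) with ha_def
  set b := Real.sqrt (1 - 4*z) with hb_def
  have ha2 : a^2 = 1 + 4*z := Real.sq_sqrt (by linarith)
  have hb2 : b^2 = 1 - 4*z := Real.sq_sqrt (by linarith)
  have ha0 : 0 ≤ a := Real.sqrt_nonneg _
  have hb0 : 0 < b := Real.sqrt_pos.mpr (by linarith)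
  have ha1 : 1 < a := by nlinarith
  have hb1 : b < 1 := by nlinarith
  have hab1 : a*b < 1 := by nlinarith [mul_nonneg ha0 hb0.le]
  have hx1 : sx1 z = (a-1)/(a+1) := by
    rw [sx1, ← ha_def, div_eq_div_iff (by positivity) (by linarith)]
    linarith [ha2]
  have hx2 : sx2 z = (1-b)/(1+b) := by
    rw [sx2, ← hb_def, div_eq_div_iff (by positivity) (by linarith)]
    linarith [hb2]
  have hx3 : sx3 z = (1+b)/(1-b) := by
    rw [sx3, ← hb_def, div_eq_div_iff (by positivity) (by linarith)]
    linarith [hb2]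
  have hx4 : sx4 z = (a+1)/(a-1) := by
    rw [sx4, ← ha_def, div_eq_div_iff (by positivity) (by linarith)]
    linarith [ha2]
  have hx1pos : 0 < sx1 z := by rw [hx1]; apply div_pos <;> linarith
  have hx12 : sx1 z < sx2 z := by
    rw [hx1, hx2, div_lt_div_iff₀ (by linarith) (by linarith)]; nlinarith
  have hx21 : sx2 z < 1 := by
    rw [hx2, div_lt_one (by linarith)]; linarith
  have hx31 : 1 < sx3 z := by
    rw [hx3, lt_div_iff₀ (by linarith)]; linarith
  have hx34 : sx3 z < sx4 z := by
    rw [hx3, hx4, div_lt_div_iff₀ (by linarith) (by linarith)]; nlinarith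
  have hx2pos : 0 < sx2 z := lt_trans hx1pos hx12
  have hx13 : sx1 z < 1 := lt_trans hx12 hx21
  have hx4g : 1 < sx4 z := lt_trans hx31 hx34
  have s14 : z * (sx1 z + sx4 z) = 1 + 2*z := by
    rw [sx1, sx4]; field_simp; ring
  have p14 : sx1 z * sx4 z = 1 := by
    rw [sx1, sx4, div_mul_div_comm, div_eq_one_iff_eq (by positivity)]
    linear_combination -ha2
  have s23 : z * (sx2 z + sx3 z) = 1 - 2*z := by
    rw [sx2, sx3]; field_simp; ring
  have p23 : sx2 z * sx3 z = 1 := by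
    rw [sx2, sx3, div_mul_div_comm, div_eq_one_iff_eq (by positivity)]
    linear_combination -hb2
  have f1 : ∀ x : ℝ, z*x^2 - (1+2*z)*x + z = z*((x - sx1 z)*(x - sx4 z)) := by
    intro x; linear_combination x*s14 - z*p14
  have f2 : ∀ x : ℝ, z*x^2 - (1-2*z)*x + z = z*((x - sx2 z)*(x - sx3 z)) := by
    intro x; linear_combination x*s23 - z*p23
  have hfac : ∀ x, dSimple z x
      = z^2 * ((x - sx1 z) * (x - sx4 z)) * ((x - sx2 z) * (x - sx3 z)) := by
    intro x
    have h : dSimple z x = (z*x^2 - (1+2*z)*x + z)*(z*x^2 - (1-2*z)*x + z) := by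
      unfold dSimple; ring
    rw [h, f1, f2]; ring
  -- the Möbius parameter
  set k := (a+b)/(a-b) with hk_def
  have hamb : 0 < a - b := by linarith
  have hk1 : 1 < k := by rw [hk_def, lt_div_iff₀ hamb]; linarith
  have hkq : 2*z*k^2 - k + 2*z = 0 := by
    rw [hk_def]; field_simp
    linear_combination (4*z-1) * ha2 + (4*z+1) * hb2
  have hrel : k*(sx1 z + sx2 z) = 1 + sx1 z * sx2 z := by
    rw [hk_def, hx1, hx2]; field_simp; ring
  -- integrability
  have hC1 : 0 < z^2*((sx2 z - sx1 z) * ((sx3 z - sx1 z) * (sx4 z - sx1 z))) := by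
    have hz2 := pow_pos hz0 2
    apply mul_pos hz2
    apply mul_pos (by linarith)
    apply mul_pos <;> linarith
  have hC2 : 0 < z^2*((sx2 z - sx1 z) * ((sx3 z - 1) * (sx4 z - 1))) := by
    have hz2 := pow_pos hz0 2
    apply mul_pos hz2
    apply mul_pos (by linarith)
    apply mul_pos <;> linarith
  have hC3 : 0 < z^2*((1 - sx1 z) * ((1 - sx2 z) * (sx4 z - sx3 z))) := by
    have hz2 := pow_pos hz0 2
    apply mul_pos hz2
    apply mul_pos (by linarith)
    apply mul_pos <;> linarith
  have hiA : IntegrableOn (fun x => 1 / Real.sqrt (dSimple z x)) (Set.Ioo (-1 : ℝ) (sx1 z)) := by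
    apply integrableOn_right z (-1) (sx1 z) _ hC1
    intro x hx
    obtain ⟨h1, h2⟩ := hx
    have big : (sx2 z - sx1 z) * ((sx3 z - sx1 z) * (sx4 z - sx1 z))
        ≤ (sx2 z - x) * ((sx3 z - x) * (sx4 z - x)) :=
      mul_le_mul (by linarith)
        (mul_le_mul (by linarith) (by linarith) (by linarith) (by linarith))
        (mul_nonneg (by linarith) (by linarith)) (by linarith)
    have hnn : (0:ℝ) ≤ z^2 * (sx1 z - x) := mul_nonneg (sq_nonneg z) (by linarith)
    have hm := mul_le_mul_of_nonneg_left big hnn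
    rw [hfac x]
    linarith [hm]
  have hiB : IntegrableOn (fun x => 1 / Real.sqrt (dSimple z x)) (Set.Ioo (sx2 z) 1) := by
    apply integrableOn_left z (sx2 z) 1 _ hC2
    intro x hx
    obtain ⟨h1, h2⟩ := hx
    have big : (sx2 z - sx1 z) * ((sx3 z - 1) * (sx4 z - 1))
        ≤ (x - sx1 z) * ((sx3 z - x) * (sx4 z - x)) :=
      mul_le_mul (by linarith)
        (mul_le_mul (by linarith) (by linarith) (by linarith) (by linarith))
        (mul_nonneg (by linarith) (by linarith)) (by linarith)
    have hnn : (0:ℝ) ≤ z^2 * (x - sx2 z) := mul_nonneg (sq_nonneg z) (by linarith)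
    have hm := mul_le_mul_of_nonneg_left big hnn
    rw [hfac x]
    linarith [hm]
  have hiC : IntegrableOn (fun x => 1 / Real.sqrt (dSimple z x)) (Set.Ioo 1 (sx3 z)) := by
    apply integrableOn_right z 1 (sx3 z) _ hC3
    intro x hx
    obtain ⟨h1, h2⟩ := hx
    have big : (1 - sx1 z) * ((1 - sx2 z) * (sx4 z - sx3 z))
        ≤ (x - sx1 z) * ((x - sx2 z) * (sx4 z - x)) :=
      mul_le_mul (by linarith)
        (mul_le_mul (by linarith) (by linarith) (by linarith) (by linarith))
        (mul_nonneg (by linarith) (by linarith)) (by linarith)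
    have hnn : (0:ℝ) ≤ z^2 * (sx3 z - x) := mul_nonneg (sq_nonneg z) (by linarith)
    have hm := mul_le_mul_of_nonneg_left big hnn
    rw [hfac x]
    linarith [hm]
  -- substitution x ↦ 1/x maps Ioo x2 1 onto Ioo 1 x3
  have himg_inv : (fun u : ℝ => (0*u+1)/(1*u+0)) '' Set.Ioo (sx2 z) 1 = Set.Ioo 1 (sx3 z) := by
    have hfun : (fun u : ℝ => (0*u+1)/(1*u+0)) = fun u : ℝ => 1/u := by
      funext u; norm_num
    rw [hfun]
    ext y
    simp only [Set.mem_image, Set.mem_Ioo]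
    constructor
    · rintro ⟨u, ⟨hu1, hu2⟩, rfl⟩
      have hu0 : 0 < u := lt_trans hx2pos hu1
      have h5 : sx3 z * sx2 z < sx3 z * u := mul_lt_mul_of_pos_left hu1 (by linarith)
      constructor
      · exact one_lt_one_div hu0 hu2
      · rw [div_lt_iff₀ hu0]; linarith [h5, p23]
    · rintro ⟨hy1, hy2⟩
      have hy0 : (0:ℝ) < y := by linarith
      have h5 : sx2 z * y < sx2 z * sx3 z := mul_lt_mul_of_pos_left hy2 hx2pos
      refine ⟨1/y, ⟨?_, ?_⟩, ?_⟩
      · rw [lt_div_iff₀ hy0]; linarith [h5, p23]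
      · rw [div_lt_one hy0]; linarith
      · field_simp
  have hsubA : (∫ x in Set.Ioo (1:ℝ) (sx3 z), 1 / Real.sqrt (dSimple z x))
      = ∫ u in Set.Ioo (sx2 z) 1, 1 / Real.sqrt (dSimple z u) := by
    rw [← himg_inv]
    apply mobius_sub z 0 1 1 0 (sx2 z) 1
    · intro u hu
      have : (0:ℝ) < 1*u + 0 := by simpa using lt_trans hx2pos hu.1
      exact this.ne'
    · norm_num
    · intro u hu
      have hu0 : (0:ℝ) < u := lt_trans hx2pos hu.1
      have harg : (0*u+1)/(1*u+0) = u⁻¹ := by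
        rw [zero_mul, zero_add, one_mul, add_zero, one_div]
      rw [harg]
      linear_combination dSimple_inv z u hu0.ne'
  -- substitution via the Möbius involution ψ(u) = (ku-1)/(u-k)
  have hkx1 : sx1 z < k := by linarith
  have e2 : ∀ u : ℝ, u - k ≠ 0 →
      (k*u-1)/(u-k) - sx2 z = ((k - sx2 z)*(u - sx1 z))/(u-k) := by
    intro u hu
    rw [div_sub' hu, div_eq_div_iff hu hu]
    linear_combination (u - k) * hrel
  have himg_psi : (fun u : ℝ => (k*u + -1)/(1*u + -k)) '' Set.Ioo (-1:ℝ) (sx1 z)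
      = Set.Ioo (sx2 z) 1 := by
    have hfun : (fun u : ℝ => (k*u + -1)/(1*u + -k)) = fun u : ℝ => (k*u-1)/(u-k) := by
      funext u; ring_nf
    rw [hfun]
    ext y
    simp only [Set.mem_image, Set.mem_Ioo]
    constructor
    · rintro ⟨u, ⟨hu1, hu2⟩, rfl⟩
      have hduk : u - k < 0 := by linarith
      constructor
      · have h6 := e2 u hduk.ne
        have h7 : ((k - sx2 z)*(u - sx1 z))/(u-k) > 0 :=
          div_pos_of_neg_of_neg (mul_neg_of_pos_of_neg (by linarith) (by linarith)) hduk
        linarith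
      · have e1 : (k*u-1)/(u-k) - 1 = ((k-1)*(u+1))/(u-k) := by
          rw [div_sub' hduk.ne, div_eq_div_iff hduk.ne hduk.ne]; ring
        have h7 : ((k-1)*(u+1))/(u-k) < 0 :=
          div_neg_of_pos_of_neg (mul_pos (by linarith) (by linarith)) hduk
        linarith
    · rintro ⟨hy1, hy2⟩
      have hdyk : y - k < 0 := by linarith
      have e3 : (k*y-1)/(y-k) + 1 = ((k+1)*(y-1))/(y-k) := by
        rw [div_add' _ _ _ hdyk.ne, div_eq_div_iff hdyk.ne hdyk.ne]; ring
      have e4 : sx1 z - (k*y-1)/(y-k) = ((k - sx1 z)*(y - sx2 z))/(k - y) := by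
        rw [sub_div' hdyk.ne]
        rw [div_eq_div_iff hdyk.ne (show k - y ≠ 0 by linarith)]
        linear_combination (y - k) * hrel
      have hm1 : -1 < (k*y-1)/(y-k) := by
        have h7 : ((k+1)*(y-1))/(y-k) > 0 :=
          div_pos_of_neg_of_neg (mul_neg_of_pos_of_neg (by linarith) (by linarith)) hdyk
        linarith
      have hm2 : (k*y-1)/(y-k) < sx1 z := by
        have h7 : ((k - sx1 z)*(y - sx2 z))/(k - y) > 0 :=
          div_pos (mul_pos (by linarith) (by linarith)) (by linarith)
        linarith
      refine ⟨(k*y-1)/(y-k), ⟨hm1, hm2⟩, ?_⟩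
      have hne : (k*y-1)/(y-k) - k ≠ 0 := by
        have : (k*y-1)/(y-k) - k < 0 := by linarith
        exact this.ne
      rw [div_eq_iff hne]
      have hyk : y - k ≠ 0 := hdyk.ne
      field_simp
      ring
  have hsubB : (∫ x in Set.Ioo (sx2 z) 1, 1 / Real.sqrt (dSimple z x))
      = ∫ u in Set.Ioo (-1:ℝ) (sx1 z), 1 / Real.sqrt (dSimple z u) := by
    rw [← himg_psi]
    apply mobius_sub z k (-1) 1 (-k) (-1) (sx1 z)
    · intro u hu
      have : 1*u + -k < 0 := by
        have := hu.2; simp only [one_mul]; linarith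
      exact this.ne
    · have : k*(-k) - (-1)*1 < 0 := by nlinarith
      exact this.ne
    · intro u hu
      have hduk : u - k ≠ 0 := by
        have := hu.2; have h8 : u - k < 0 := by linarith
        exact h8.ne
      have harg : (k*u + -1)/(1*u + -k) = (k*u-1)/(u-k) := by ring_nf
      rw [harg]
      linear_combination key_identity z k u hkq hduk
  -- interval integrability
  have hii2 : IntervalIntegrable (fun x => 1 / Real.sqrt (dSimple z x)) volume (sx2 z) 1 := by
    rw [intervalIntegrable_iff_integrableOn_Ioc_of_le hx21.le]
    exact hiB.congr_set_ae Ioo_ae_eq_Ioc.symm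
  have hii3 : IntervalIntegrable (fun x => 1 / Real.sqrt (dSimple z x)) volume 1 (sx3 z) := by
    rw [intervalIntegrable_iff_integrableOn_Ioc_of_le hx31.le]
    exact hiC.congr_set_ae Ioo_ae_eq_Ioc.symm
  refine ⟨by rw [hfac]; ring, by rw [hfac]; ring, by rw [hfac]; ring, by rw [hfac]; ring,
    hx1pos, hx12, hx21, hx31, hx34, ?_⟩
  have hsplit := intervalIntegral.integral_add_adjacent_intervals hii2 hii3
    (f := fun x => 1 / Real.sqrt (dSimple z x))
  have g2 : (∫ x in sx2 z..1, 1 / Real.sqrt (dSimple z x))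
      = ∫ x in Set.Ioo (sx2 z) 1, 1 / Real.sqrt (dSimple z x) := by
    rw [intervalIntegral.integral_of_le hx21.le, MeasureTheory.integral_Ioc_eq_integral_Ioo]
  have g3 : (∫ x in (1:ℝ)..sx3 z, 1 / Real.sqrt (dSimple z x))
      = ∫ x in Set.Ioo (1:ℝ) (sx3 z), 1 / Real.sqrt (dSimple z x) := by
    rw [intervalIntegral.integral_of_le hx31.le, MeasureTheory.integral_Ioc_eq_integral_Ioo]
  have g1 : (∫ x in (-1:ℝ)..sx1 z, 1 / Real.sqrt (dSimple z x))
      = ∫ x in Set.Ioo (-1:ℝ) (sx1 z), 1 / Real.sqrt (dSimple z x) := by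
    rw [intervalIntegral.integral_of_le (by linarith : (-1:ℝ) ≤ sx1 z),
      MeasureTheory.integral_Ioc_eq_integral_Ioo]
  rw [← hsplit, g2, g3, hsubA, hsubB, g1]
  ring
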